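/- arXiv:1501.05794 — 2 statements merged into one kernel-verified Lean document; each statement's English description precedes it below -/
import Mathlib

section
/- Let P be a nonzero univariate real polynomial and a ∈ ℝ with −1 < deg(P)·a < 1. Then the scalar weight |P(x)|^a satisfies the A₂ condition on [0,1): sup over intervals I ⊂ [0,1) of (|I|^{−1}∫_I |P|^a dx)(|I|^{−1}∫_I |P|^{−a} dx) < ∞. -/
open MeasureTheory Real intervalIntegral

set_option maxHeartbeats 1000000

-- interval integrability of |x|^γ for γ > -1
lemma II_abs_rpow {γ : ℝ} (hγ : -1 < γ) (a b : ℝ) :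
    IntervalIntegrable (fun x : ℝ => |x| ^ γ) volume a b := by
  have base : ∀ c : ℝ, 0 ≤ c → IntervalIntegrable (fun x : ℝ => |x| ^ γ) volume 0 c := by
    intro c hc
    have h1 : IntervalIntegrable (fun x : ℝ => x ^ γ) volume 0 c :=
      intervalIntegrable_rpow' hγ
    rw [intervalIntegrable_iff_integrableOn_Ioc_of_le hc] at h1 ⊢
    exact h1.congr_fun (fun x hx => by rw [abs_of_pos hx.1]) measurableSet_Ioc
  have baseneg : ∀ c : ℝ, 0 ≤ c → IntervalIntegrable (fun x : ℝ => |x| ^ γ) volume (-c) 0 := by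
    intro c hc
    have := ((IntervalIntegrable.iff_comp_neg (f := fun x : ℝ => |x| ^ γ) (a := 0) (b := c) (by simp)).mp (base c hc))
    simpa [abs_neg] using this.symm
  have all : ∀ M : ℝ, 0 ≤ M → IntervalIntegrable (fun x : ℝ => |x| ^ γ) volume (-M) M := by
    intro M hM
    exact (baseneg M hM).trans (base M hM)
  set M := |a| + |b| with hM
  have hM0 : 0 ≤ M := by positivity
  apply (all M hM0).mono_set
  have hMM : Set.uIcc (-M) M = Set.Icc (-M) M := Set.uIcc_of_le (by linarith)
  apply Set.uIcc_subset_uIcc <;> rw [hMM, Set.mem_Icc] <;>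
    constructor <;> cases' abs_cases a with h h <;> cases' abs_cases b with h' h' <;>
    simp [hM] <;> linarith [abs_nonneg a, abs_nonneg b]

lemma II_abs_rpow_shift {γ : ℝ} (hγ : -1 < γ) (r a b : ℝ) :
    IntervalIntegrable (fun x : ℝ => |x - r| ^ γ) volume a b := by
  have := (II_abs_rpow hγ (a - r) (b - r)).comp_sub_right r
  simpa using this

lemma integrableOn_abs_rpow_Ico {γ : ℝ} (hγ : -1 < γ) (r u v : ℝ) :
    IntegrableOn (fun x : ℝ => |x - r| ^ γ) (Set.Ico u v) := by
  rcases le_or_gt u v with h | h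
  · have := (intervalIntegrable_iff_integrableOn_Ico_of_le h).mp (II_abs_rpow_shift hγ r u v)
    exact this
  · simp [Set.Ico_eq_empty_of_le h.le]

lemma integrableOn_abs_rpow_Icc {γ : ℝ} (hγ : -1 < γ) (r u v : ℝ) :
    IntegrableOn (fun x : ℝ => |x - r| ^ γ) (Set.Icc u v) := by
  rcases le_or_gt u v with h | h
  · exact (intervalIntegrable_iff_integrableOn_Icc_of_le h).mp (II_abs_rpow_shift hγ r u v)
  · simp [Set.Icc_eq_empty_of_lt h]

-- value bound
lemma single_bound {γ : ℝ} (hγ : -1 < γ) (r c u v : ℝ) (hc : 0 < c)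
    (hsub : Set.Ico u v ⊆ Set.Icc (r - c) (r + c)) :
    ∫ x in Set.Ico u v, |x - r| ^ γ ≤ 2 * c ^ (1 + γ) / (1 + γ) := by
  have h1 : (∫ x in Set.Ico u v, |x - r| ^ γ) ≤ ∫ x in Set.Icc (r - c) (r + c), |x - r| ^ γ := by
    apply setIntegral_mono_set (integrableOn_abs_rpow_Icc hγ r _ _)
    · filter_upwards with x using by positivity
    · exact HasSubset.Subset.eventuallyLE hsub
  refine h1.trans ?_
  have h2 : (∫ x in Set.Icc (r - c) (r + c), |x - r| ^ γ) = ∫ x in (r - c)..(r + c), |x - r| ^ γ := by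
    rw [MeasureTheory.integral_Icc_eq_integral_Ioc, intervalIntegral.integral_of_le (by linarith)]
  have h3 : (∫ x in (r - c)..(r + c), |x - r| ^ γ) = ∫ x in (-c)..c, |x| ^ γ := by
    have := intervalIntegral.integral_comp_sub_right (a := r - c) (b := r + c)
      (fun y : ℝ => |y| ^ γ) r
    simpa using this
  have h4 : (∫ x in (-c)..(0:ℝ), |x| ^ γ) = ∫ x in (0:ℝ)..c, |x| ^ γ := by
    have := intervalIntegral.integral_comp_neg (a := (0:ℝ)) (b := c) (fun y : ℝ => |y| ^ γ)
    simpa [abs_neg] using this.symm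
  have h5 : (∫ x in (0:ℝ)..c, |x| ^ γ) = ∫ x in (0:ℝ)..c, x ^ γ := by
    apply intervalIntegral.integral_congr
    intro x hx
    rw [Set.uIcc_of_le hc.le] at hx
    simp [abs_of_nonneg hx.1]
  have h6 : (∫ x in (0:ℝ)..c, x ^ γ) = c ^ (γ + 1) / (γ + 1) := by
    rw [integral_rpow (Or.inl hγ)]
    rw [Real.zero_rpow (by linarith)]
    ring
  have h7 : (∫ x in (-c)..c, |x| ^ γ) =
      (∫ x in (-c)..(0:ℝ), |x| ^ γ) + ∫ x in (0:ℝ)..c, |x| ^ γ := by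
    rw [intervalIntegral.integral_add_adjacent_intervals (II_abs_rpow hγ _ _) (II_abs_rpow hγ _ _)]
  rw [h2, h3, h7, h4, h5, h6, add_comm 1 γ]
  rw [← add_div]
  apply le_of_eq; ring

-- pointwise comparison for far roots
lemma far_pt {γ r s x L : ℝ} (hL : 0 < L) (hγ : |γ| ≤ 1)
    (hxr : L ≤ |x - r|) (hsr : L ≤ |s - r|) (hx : |x - s| ≤ L) :
    |x - r| ^ γ ≤ 2 * |s - r| ^ γ := by
  have hd : 0 < |s - r| := lt_of_lt_of_le hL hsr
  have hx0 : 0 < |x - r| := lt_of_lt_of_le hL hxr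
  have hup : |x - r| ≤ 2 * |s - r| := by
    have : |x - r| ≤ |x - s| + |s - r| := by
      have := abs_sub_le x s r; linarith [this]
    linarith
  have hdn : |s - r| / 2 ≤ |x - r| := by
    have : |s - r| ≤ |s - x| + |x - r| := abs_sub_le s x r
    rw [abs_sub_comm s x] at this
    linarith
  have hC : (0:ℝ) ≤ |s - r| ^ γ := Real.rpow_nonneg hd.le γ
  rcases le_or_gt 0 γ with hg | hg
  · have hA : |x - r| ^ γ ≤ (2 * |s - r|) ^ γ := Real.rpow_le_rpow (abs_nonneg _) hup hg
    have hB : (2 * |s - r|) ^ γ = 2 ^ γ * |s - r| ^ γ := Real.mul_rpow (by norm_num) hd.le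
    have h2 : (2:ℝ) ^ γ ≤ 2 := by
      have h3 : γ ≤ (1:ℝ) := by rw [abs_of_nonneg hg] at hγ; exact hγ
      have := Real.rpow_le_rpow_of_exponent_le (x := 2) (by norm_num) h3
      simpa using this
    nlinarith
  · have hA : |x - r| ^ γ ≤ (|s - r| / 2) ^ γ :=
      Real.rpow_le_rpow_of_nonpos (by positivity) hdn hg.le
    have hB : (|s - r| / 2) ^ γ = |s - r| ^ γ / 2 ^ γ := Real.div_rpow hd.le (by norm_num : (0:ℝ) ≤ 2) γ
    have h2 : ((2:ℝ) ^ γ)⁻¹ ≤ 2 := by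
      rw [← Real.rpow_neg (by norm_num)]
      have h3 : -γ ≤ (1:ℝ) := by rw [abs_of_neg hg] at hγ; exact hγ
      have := Real.rpow_le_rpow_of_exponent_le (x := 2) (by norm_num) h3
      simpa using this
    have h2' : (0:ℝ) < (2:ℝ) ^ γ := Real.rpow_pos_of_pos (by norm_num) γ
    rw [hB, div_eq_mul_inv] at hA
    nlinarith

lemma integral_const_Ico {s t c : ℝ} (hst : s ≤ t) :
    ∫ _x in Set.Ico s t, c = (t - s) * c := by
  rw [setIntegral_const, Real.volume_real_Ico, smul_eq_mul, max_eq_left (by linarith)]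

lemma bound_far (F : Finset ℝ) (b : ℝ → ℝ) (hb : ∀ r ∈ F, |b r| ≤ 1) (f : ℝ → ℝ) {q s t : ℝ}
    (hq : 0 ≤ q) (hst : s < t)
    (hf : ∀ x ∈ Set.Ico s t, 0 ≤ f x ∧ f x ≤ q * ∏ r ∈ F, |x - r| ^ b r)
    (hfar : ∀ r ∈ F, ∀ x ∈ Set.Ico s t, (t - s) ≤ |x - r| ∧ (t - s) ≤ |s - r|) :
    ∫ x in Set.Ico s t, f x ≤ q * 2 ^ F.card * (∏ r ∈ F, |s - r| ^ b r) * (t - s) := by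
  have hL : 0 < t - s := by linarith
  have key : ∀ x ∈ Set.Ico s t, f x ≤ q * 2 ^ F.card * ∏ r ∈ F, |s - r| ^ b r := by
    intro x hx
    refine (hf x hx).2.trans ?_
    have h1 : (∏ r ∈ F, |x - r| ^ b r) ≤ ∏ r ∈ F, 2 * |s - r| ^ b r := by
      apply Finset.prod_le_prod
      · intro r _; positivity
      · intro r hr
        exact far_pt hL (hb r hr) (hfar r hr x hx).1 (hfar r hr x hx).2
          (by rw [abs_of_nonneg (by linarith [hx.1])]; linarith [hx.2])
    have h2 : (∏ r ∈ F, 2 * |s - r| ^ b r) = 2 ^ F.card * ∏ r ∈ F, |s - r| ^ b r := by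
      rw [Finset.prod_mul_distrib, Finset.prod_const]
    calc q * ∏ r ∈ F, |x - r| ^ b r ≤ q * ∏ r ∈ F, 2 * |s - r| ^ b r := by
          apply mul_le_mul_of_nonneg_left h1 hq
      _ = q * 2 ^ F.card * ∏ r ∈ F, |s - r| ^ b r := by rw [h2]; ring
  have hint : ∫ x in Set.Ico s t, f x ≤
      ∫ _x in Set.Ico s t, (q * 2 ^ F.card * ∏ r ∈ F, |s - r| ^ b r) := by
    apply integral_mono_of_nonneg
    · exact (ae_restrict_iff' measurableSet_Ico).mpr
        (Filter.Eventually.of_forall fun x hx => (hf x hx).1)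
    · exact integrableOn_const (by rw [Real.volume_Ico]; exact ENNReal.ofReal_ne_top)
    · exact (ae_restrict_iff' measurableSet_Ico).mpr (Filter.Eventually.of_forall key)
  rw [integral_const_Ico hst.le] at hint
  refine hint.trans (le_of_eq (by ring))

lemma bound_near (F : Finset ℝ) (b : ℝ → ℝ) (hb : ∀ r ∈ F, |b r| ≤ 1) (f : ℝ → ℝ)
    {q s t : ℝ} (hq : 0 ≤ q) (hst : s < t)
    (hf : ∀ x ∈ Set.Ico s t, 0 ≤ f x ∧ f x ≤ q * ∏ r ∈ F, |x - r| ^ b r)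
    {r0 : ℝ} (hr0 : r0 ∈ F) (hb0 : |b r0| < 1) (hnear : |s - r0| ≤ 2 * (t - s))
    (hfar : ∀ r ∈ F.erase r0, ∀ x ∈ Set.Ico s t, (t - s) ≤ |x - r| ∧ (t - s) ≤ |s - r|) :
    ∫ x in Set.Ico s t, f x ≤ q * 2 ^ F.card * (∏ r ∈ F.erase r0, |s - r| ^ b r) *
      (2 * (3 * (t - s)) ^ (1 + b r0) / (1 + b r0)) := by
  have hL : 0 < t - s := by linarith
  have hb0l : -1 < b r0 := neg_lt_of_abs_lt hb0
  set G := ∏ r ∈ F.erase r0, |s - r| ^ b r with hG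
  have hG0 : 0 ≤ G := Finset.prod_nonneg fun r _ => Real.rpow_nonneg (abs_nonneg _) _
  set Q := q * 2 ^ F.card * G with hQdef
  have hQ0 : 0 ≤ Q := by positivity
  have key : ∀ x ∈ Set.Ico s t, f x ≤ Q * |x - r0| ^ b r0 := by
    intro x hx
    refine (hf x hx).2.trans ?_
    rw [← Finset.mul_prod_erase F _ hr0]
    have h1 : (∏ r ∈ F.erase r0, |x - r| ^ b r) ≤ 2 ^ (F.erase r0).card * G := by
      rw [hG, ← Finset.prod_const, ← Finset.prod_mul_distrib]
      apply Finset.prod_le_prod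
      · intro r _; positivity
      · intro r hr
        exact far_pt hL (hb r (Finset.mem_of_mem_erase hr)) (hfar r hr x hx).1
          (hfar r hr x hx).2
          (by rw [abs_of_nonneg (by linarith [hx.1])]; linarith [hx.2])
    have h2 : (2:ℝ) ^ (F.erase r0).card ≤ 2 ^ F.card :=
      pow_le_pow_right₀ (by norm_num) (Finset.card_le_card (Finset.erase_subset _ _))
    have h3 : (0:ℝ) ≤ |x - r0| ^ b r0 := Real.rpow_nonneg (abs_nonneg _) _
    calc q * (|x - r0| ^ b r0 * ∏ r ∈ F.erase r0, |x - r| ^ b r)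
        ≤ q * (|x - r0| ^ b r0 * (2 ^ (F.erase r0).card * G)) := by
          apply mul_le_mul_of_nonneg_left (mul_le_mul_of_nonneg_left h1 h3) hq
      _ ≤ q * (|x - r0| ^ b r0 * (2 ^ F.card * G)) := by
          apply mul_le_mul_of_nonneg_left (mul_le_mul_of_nonneg_left
            (mul_le_mul_of_nonneg_right h2 hG0) h3) hq
      _ = Q * |x - r0| ^ b r0 := by rw [hQdef]; ring
  have hint : ∫ x in Set.Ico s t, f x ≤ ∫ x in Set.Ico s t, Q * |x - r0| ^ b r0 := by
    apply integral_mono_of_nonneg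
    · exact (ae_restrict_iff' measurableSet_Ico).mpr
        (Filter.Eventually.of_forall fun x hx => (hf x hx).1)
    · exact (integrableOn_abs_rpow_Ico hb0l r0 s t).const_mul Q
    · exact (ae_restrict_iff' measurableSet_Ico).mpr (Filter.Eventually.of_forall key)
  rw [MeasureTheory.integral_const_mul] at hint
  have hsingle : ∫ x in Set.Ico s t, |x - r0| ^ b r0 ≤
      2 * (3 * (t - s)) ^ (1 + b r0) / (1 + b r0) := by
    apply single_bound hb0l r0 (3 * (t - s)) s t (by linarith)
    intro x hx
    have h1 : |x - r0| ≤ 3 * (t - s) := by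
      have h2 : |x - r0| ≤ |x - s| + |s - r0| := by
        have := abs_sub_le x s r0; linarith
      have h3 : |x - s| ≤ t - s := by
        rw [abs_of_nonneg (by linarith [hx.1])]; linarith [hx.2]
      linarith
    have := abs_le.mp h1
    constructor <;> linarith [this.1, this.2]
  calc ∫ x in Set.Ico s t, f x ≤ Q * ∫ x in Set.Ico s t, |x - r0| ^ b r0 := hint
    _ ≤ Q * (2 * (3 * (t - s)) ^ (1 + b r0) / (1 + b r0)) :=
        mul_le_mul_of_nonneg_left hsingle hQ0
    _ = q * 2 ^ F.card * G * (2 * (3 * (t - s)) ^ (1 + b r0) / (1 + b r0)) := by rw [hQdef]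

lemma amgm_dom (F : Finset ℝ) (b : ℝ → ℝ) {β : ℝ} (hβdef : β = ∑ r ∈ F, |b r|)
    (hβpos : 0 < β) (x : ℝ) :
    (∏ r ∈ F, |x - r| ^ b r) ≤
      ∑ r ∈ F, (|b r| / β) * |x - r| ^ (if 0 ≤ b r then β else -β) := by
  have hsum : (∑ r ∈ F, |b r| / β) = 1 := by
    rw [← Finset.sum_div, ← hβdef]; field_simp
  have := Real.geom_mean_le_arith_mean_weighted F (fun r => |b r| / β)
    (fun r => |x - r| ^ (if 0 ≤ b r then β else -β))
    (fun r _ => by positivity) hsum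
    (fun r _ => Real.rpow_nonneg (abs_nonneg _) _)
  refine le_trans (le_of_eq ?_) (this)
  apply Finset.prod_congr rfl
  intro r _
  rw [← Real.rpow_mul (abs_nonneg _)]
  congr 1
  split_ifs with h
  · rw [abs_of_nonneg h]; field_simp
  · rw [abs_of_neg (lt_of_not_ge h)]; field_simp

lemma bound_long (F : Finset ℝ) (b : ℝ → ℝ) (f : ℝ → ℝ) {q s t β K : ℝ}
    (hq : 0 ≤ q) (hst : s < t)
    (hβdef : β = ∑ r ∈ F, |b r|) (hβpos : 0 < β) (hβ : β < 1)
    (hK1 : 1 ≤ K) (hK2 : ∀ r ∈ F, ∀ x ∈ Set.Ico s t, |x - r| ≤ K)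
    (hf : ∀ x ∈ Set.Ico s t, 0 ≤ f x ∧ f x ≤ q * ∏ r ∈ F, |x - r| ^ b r) :
    ∫ x in Set.Ico s t, f x ≤ q * (2 * K ^ (2:ℝ) / (1 - β)) := by
  set c : ℝ → ℝ := fun r => if 0 ≤ b r then β else -β with hc
  have hcl : ∀ r, -1 < c r := by
    intro r; rw [hc]; dsimp only; split_ifs <;> linarith
  have hint : ∀ r ∈ F, IntegrableOn (fun x => |b r| / β * |x - r| ^ c r) (Set.Ico s t) := by
    intro r _
    exact (integrableOn_abs_rpow_Ico (hcl r) r s t).const_mul _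
  have step1 : ∫ x in Set.Ico s t, f x ≤
      ∫ x in Set.Ico s t, q * ∑ r ∈ F, (|b r| / β) * |x - r| ^ c r := by
    apply integral_mono_of_nonneg
    · exact (ae_restrict_iff' measurableSet_Ico).mpr
        (Filter.Eventually.of_forall fun x hx => (hf x hx).1)
    · exact (integrable_finset_sum F hint).const_mul q
    · refine (ae_restrict_iff' measurableSet_Ico).mpr (Filter.Eventually.of_forall ?_)
      intro x hx
      refine (hf x hx).2.trans (mul_le_mul_of_nonneg_left ?_ hq)
      exact amgm_dom F b hβdef hβpos x
  rw [MeasureTheory.integral_const_mul, MeasureTheory.integral_finset_sum F hint] at step1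
  have step2 : ∀ r ∈ F, (∫ x in Set.Ico s t, |b r| / β * |x - r| ^ c r) ≤
      (|b r| / β) * (2 * K ^ (2:ℝ) / (1 - β)) := by
    intro r hr
    rw [MeasureTheory.integral_const_mul]
    apply mul_le_mul_of_nonneg_left _ (by positivity)
    have hsb : (∫ x in Set.Ico s t, |x - r| ^ c r) ≤ 2 * K ^ (1 + c r) / (1 + c r) := by
      apply single_bound (hcl r) r K s t (by linarith)
      intro x hx
      have := abs_le.mp (hK2 r hr x hx)
      constructor <;> linarith [this.1, this.2]
    refine hsb.trans ?_
    have hnum : K ^ (1 + c r) ≤ K ^ (2:ℝ) := by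
      apply Real.rpow_le_rpow_of_exponent_le hK1
      rw [hc]; dsimp only; split_ifs <;> linarith
    have hden : 1 - β ≤ 1 + c r := by
      rw [hc]; dsimp only; split_ifs <;> linarith
    apply div_le_div₀ (by positivity) (by linarith) (by linarith) hden
  have step3 : (∑ r ∈ F, ∫ x in Set.Ico s t, |b r| / β * |x - r| ^ c r) ≤
      ∑ r ∈ F, (|b r| / β) * (2 * K ^ (2:ℝ) / (1 - β)) :=
    Finset.sum_le_sum step2
  have hsum : (∑ r ∈ F, |b r| / β) = 1 := by
    rw [← Finset.sum_div, ← hβdef]; field_simp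
  rw [← Finset.sum_mul, hsum, one_mul] at step3
  calc ∫ x in Set.Ico s t, f x ≤ _ := step1
    _ ≤ q * (2 * K ^ (2:ℝ) / (1 - β)) := mul_le_mul_of_nonneg_left step3 hq

lemma prod_avg_le {L If Ig Bf Bg : ℝ} (hL : 0 < L) (hIf : 0 ≤ If) (hIg : 0 ≤ Ig)
    (h1 : If ≤ Bf) (h2 : Ig ≤ Bg) :
    (L⁻¹ * If) * (L⁻¹ * Ig) ≤ (L⁻¹ * Bf) * (L⁻¹ * Bg) := by
  have hLi : 0 ≤ L⁻¹ := by positivity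
  apply mul_le_mul (by nlinarith) (by nlinarith) (mul_nonneg hLi hIg)
    (mul_nonneg hLi (hIf.trans h1))

lemma main_key (F : Finset ℝ) (b : ℝ → ℝ) {β : ℝ} (hβdef : β = ∑ r ∈ F, |b r|)
    (hβ : β < 1) :
    ∃ C : ℝ, ∀ (q : ℝ) (f g : ℝ → ℝ), 0 ≤ q →
      ∀ s t : ℝ, 0 ≤ s → s < t → t ≤ 1 →
      (∀ x ∈ Set.Ico s t, 0 ≤ f x ∧ f x ≤ q * ∏ r ∈ F, |x - r| ^ b r) →
      (∀ x ∈ Set.Ico s t, 0 ≤ g x ∧ g x ≤ q * ∏ r ∈ F, |x - r| ^ (-(b r))) →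
      ((t - s)⁻¹ * ∫ x in Set.Ico s t, f x) * ((t - s)⁻¹ * ∫ x in Set.Ico s t, g x) ≤
        q ^ 2 * C := by
  have hβ0 : 0 ≤ β := hβdef ▸ Finset.sum_nonneg fun r _ => abs_nonneg _
  have hbβ : ∀ r ∈ F, |b r| ≤ β := by
    intro r hr
    rw [hβdef]
    exact Finset.single_le_sum (fun r _ => abs_nonneg (b r)) hr
  rcases eq_or_lt_of_le hβ0 with hβz | hβpos
  · -- degenerate case: all exponents vanish
    refine ⟨1, fun q f g hq s t hs hst ht hf hg => ?_⟩
    have hbz : ∀ r ∈ F, b r = 0 := by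
      intro r hr
      have := hbβ r hr
      rw [← hβz] at this
      simpa using abs_eq_zero.mp (le_antisymm this (abs_nonneg _))
    have hprod1 : ∀ x : ℝ, (∏ r ∈ F, |x - r| ^ b r) = 1 :=
      fun x => Finset.prod_eq_one fun r hr => by rw [hbz r hr, Real.rpow_zero]
    have hprod2 : ∀ x : ℝ, (∏ r ∈ F, |x - r| ^ (-(b r))) = 1 :=
      fun x => Finset.prod_eq_one fun r hr => by rw [hbz r hr, neg_zero, Real.rpow_zero]
    have hL : 0 < t - s := by linarith
    have hIf : ∫ x in Set.Ico s t, f x ≤ (t - s) * q := by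
      rw [← integral_const_Ico hst.le]
      apply integral_mono_of_nonneg
      · exact (ae_restrict_iff' measurableSet_Ico).mpr
          (Filter.Eventually.of_forall fun x hx => (hf x hx).1)
      · exact integrableOn_const (by rw [Real.volume_Ico]; exact ENNReal.ofReal_ne_top)
      · refine (ae_restrict_iff' measurableSet_Ico).mpr (Filter.Eventually.of_forall ?_)
        intro x hx
        have := (hf x hx).2
        rwa [hprod1 x, mul_one] at this
    have hIg : ∫ x in Set.Ico s t, g x ≤ (t - s) * q := by
      rw [← integral_const_Ico hst.le]
      apply integral_mono_of_nonneg
      · exact (ae_restrict_iff' measurableSet_Ico).mpr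
          (Filter.Eventually.of_forall fun x hx => (hg x hx).1)
      · exact integrableOn_const (by rw [Real.volume_Ico]; exact ENNReal.ofReal_ne_top)
      · refine (ae_restrict_iff' measurableSet_Ico).mpr (Filter.Eventually.of_forall ?_)
        intro x hx
        have := (hg x hx).2
        rwa [hprod2 x, mul_one] at this
    have hIf0 : 0 ≤ ∫ x in Set.Ico s t, f x :=
      setIntegral_nonneg measurableSet_Ico fun x hx => (hf x hx).1
    have hIg0 : 0 ≤ ∫ x in Set.Ico s t, g x :=
      setIntegral_nonneg measurableSet_Ico fun x hx => (hg x hx).1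
    have := prod_avg_le hL hIf0 hIg0 hIf hIg
    refine this.trans (le_of_eq ?_)
    field_simp
  -- main case: β > 0
  classical
  set δ0 : ℝ := if h : F.offDiag.Nonempty then
      min 1 ((F.offDiag.inf' h fun p => |p.1 - p.2|) / 5) else 1 with hδ0def
  have hδpos : 0 < δ0 := by
    rw [hδ0def]
    split_ifs with h
    · apply lt_min one_pos
      have : ∀ p ∈ F.offDiag, 0 < |p.1 - p.2| := by
        intro p hp
        exact abs_pos.mpr (sub_ne_zero.mpr (Finset.mem_offDiag.mp hp).2.2)
      have := (Finset.lt_inf'_iff h (a := (0:ℝ))).mpr this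
      linarith
    · exact one_pos
  have hδ1 : δ0 ≤ 1 := by
    rw [hδ0def]; split_ifs; exacts [min_le_left _ _, le_refl 1]
  have hsep : ∀ r ∈ F, ∀ r' ∈ F, r ≠ r' → 5 * δ0 ≤ |r - r'| := by
    intro r hr r' hr' hne
    have hmem : (r, r') ∈ F.offDiag := Finset.mem_offDiag.mpr ⟨hr, hr', hne⟩
    have hne' : F.offDiag.Nonempty := ⟨_, hmem⟩
    rw [hδ0def]
    rw [dif_pos hne']
    have h1 : (F.offDiag.inf' hne' fun p => |p.1 - p.2|) ≤ |r - r'| :=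
      Finset.inf'_le _ hmem
    have h2 : min 1 ((F.offDiag.inf' hne' fun p => |p.1 - p.2|) / 5) ≤
        (F.offDiag.inf' hne' fun p => |p.1 - p.2|) / 5 := min_le_right _ _
    linarith
  set K : ℝ := 1 + ∑ r ∈ F, |r| with hKdef
  have hK1 : 1 ≤ K := by
    rw [hKdef]
    have : 0 ≤ ∑ r ∈ F, |r| := Finset.sum_nonneg fun r _ => abs_nonneg r
    linarith
  have hKb : ∀ r ∈ F, ∀ x : ℝ, 0 ≤ x → x ≤ 1 → |x - r| ≤ K := by
    intro r hr x hx0 hx1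
    have h1 : |r| ≤ ∑ r ∈ F, |r| := Finset.single_le_sum (fun r _ => abs_nonneg r) hr
    have h2 : |x - r| ≤ |x| + |r| := abs_sub x r
    rw [abs_of_nonneg hx0] at h2
    rw [hKdef]; linarith
  have hb1 : ∀ r ∈ F, |b r| ≤ 1 := fun r hr => (hbβ r hr).trans hβ.le
  have hbn : ∀ r ∈ F, |(-(b r))| ≤ 1 := fun r hr => by rw [abs_neg]; exact hb1 r hr
  have hβdefn : β = ∑ r ∈ F, |(-(b r))| := by simpa [abs_neg] using hβdef
  refine ⟨(2 * K ^ (2:ℝ) / (1 - β) / δ0) ^ 2 + 4 ^ F.card * (36 / (1 - β ^ 2)) + 4 ^ F.card,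
    fun q f g hq s t hs hst ht hf hg => ?_⟩
  have hL : 0 < t - s := by linarith
  have hL1 : t - s ≤ 1 := by linarith
  have hIf0 : 0 ≤ ∫ x in Set.Ico s t, f x :=
    setIntegral_nonneg measurableSet_Ico fun x hx => (hf x hx).1
  have hIg0 : 0 ≤ ∫ x in Set.Ico s t, g x :=
    setIntegral_nonneg measurableSet_Ico fun x hx => (hg x hx).1
  have h4c : (0:ℝ) ≤ 4 ^ F.card := by positivity
  have hβsq : 0 < 1 - β ^ 2 := by nlinarith
  have hx01 : ∀ x ∈ Set.Ico s t, 0 ≤ x ∧ x ≤ 1 := fun x hx =>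
    ⟨le_trans hs hx.1, le_trans hx.2.le ht⟩
  rcases le_or_gt δ0 (t - s) with hlong | hshort
  · -- long intervals
    have hK2 : ∀ r ∈ F, ∀ x ∈ Set.Ico s t, |x - r| ≤ K := fun r hr x hx =>
      hKb r hr x (hx01 x hx).1 (hx01 x hx).2
    have Hf := bound_long F b f hq hst hβdef hβpos hβ hK1 hK2 hf
    have Hg := bound_long F (fun r => -(b r)) g hq hst hβdefn hβpos hβ hK1 hK2 hg
    have := prod_avg_le hL hIf0 hIg0 Hf Hg
    refine this.trans ?_
    have hM : 0 ≤ 2 * K ^ (2:ℝ) / (1 - β) := by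
      have : (0:ℝ) < K ^ (2:ℝ) := Real.rpow_pos_of_pos (by linarith) _
      have hβ1 : (0:ℝ) < 1 - β := by linarith
      positivity
    have hstep : (t - s)⁻¹ * (q * (2 * K ^ (2:ℝ) / (1 - β))) ≤
        δ0⁻¹ * (q * (2 * K ^ (2:ℝ) / (1 - β))) := by
      apply mul_le_mul_of_nonneg_right _ (by positivity)
      exact inv_anti₀ hδpos hlong
    have h0 : 0 ≤ (t - s)⁻¹ * (q * (2 * K ^ (2:ℝ) / (1 - β))) := by positivity
    have := mul_le_mul hstep hstep h0 (h0.trans hstep)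
    refine le_trans this ?_
    have heq : δ0⁻¹ * (q * (2 * K ^ (2:ℝ) / (1 - β))) *
        (δ0⁻¹ * (q * (2 * K ^ (2:ℝ) / (1 - β)))) =
        q ^ 2 * (2 * K ^ (2:ℝ) / (1 - β) / δ0) ^ 2 := by
      field_simp
    rw [heq]
    have hrest : (0:ℝ) ≤ 4 ^ F.card * (36 / (1 - β ^ 2)) + 4 ^ F.card := by positivity
    nlinarith [sq_nonneg q, mul_nonneg (sq_nonneg q) hrest]
  · -- short intervals
    by_cases hnear : ∃ r ∈ F, |s - r| ≤ 2 * (t - s)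
    · -- one near root
      obtain ⟨r0, hr0, hnear0⟩ := hnear
      have hfar : ∀ r ∈ F.erase r0, ∀ x ∈ Set.Ico s t, t - s ≤ |x - r| ∧ t - s ≤ |s - r| := by
        intro r hr x hx
        have hrF : r ∈ F := Finset.mem_of_mem_erase hr
        have hrne : r ≠ r0 := Finset.ne_of_mem_erase hr
        have hsep' : 5 * δ0 ≤ |r - r0| := hsep r hrF r0 hr0 hrne
        have hxs : |x - s| ≤ t - s := by
          rw [abs_of_nonneg (by linarith [hx.1])]; linarith [hx.2]
        have hxr0 : |x - r0| ≤ 3 * (t - s) := by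
          have := abs_sub_le x s r0
          linarith
        constructor
        · have h1 : |r - r0| ≤ |r - x| + |x - r0| := abs_sub_le r x r0
          rw [abs_sub_comm r x] at h1
          linarith
        · have h1 : |r - r0| ≤ |r - s| + |s - r0| := abs_sub_le r s r0
          rw [abs_sub_comm r s] at h1
          linarith
      have hb0 : |b r0| < 1 := lt_of_le_of_lt (hbβ r0 hr0) hβ
      have hb0n : |(-(b r0))| < 1 := by rwa [abs_neg]
      have Hf := bound_near F b hb1 f hq hst hf hr0 hb0 hnear0 hfar
      have Hg := bound_near F (fun r => -(b r)) hbn g hq hst hg hr0 hb0n hnear0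
        (by simpa [abs_neg] using hfar)
      set Gf := ∏ r ∈ F.erase r0, |s - r| ^ b r with hGf
      have hGfpos : 0 < Gf := by
        apply Finset.prod_pos
        intro r hr
        have := (hfar r hr s (by constructor <;> [linarith; linarith [hst]])).2
        exact Real.rpow_pos_of_pos (by linarith) _
      have hGg : (∏ r ∈ F.erase r0, |s - r| ^ (-(b r))) = Gf⁻¹ := by
        rw [hGf, ← Finset.prod_inv_distrib]
        apply Finset.prod_congr rfl
        intro r hr
        rw [Real.rpow_neg (abs_nonneg _)]
      rw [hGg] at Hg
      have hb0l : -1 < b r0 := neg_lt_of_abs_lt hb0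
      have hb0u : b r0 < 1 := lt_of_abs_lt hb0
      have := prod_avg_le hL hIf0 hIg0 Hf Hg
      refine this.trans ?_
      have hXX : (3 * (t - s)) ^ (1 + b r0) * (3 * (t - s)) ^ (1 + -(b r0)) = 9 * (t - s) ^ 2 := by
        rw [← Real.rpow_add (by positivity)]
        have h9 : (1 + b r0) + (1 + -(b r0)) = ((2:ℕ):ℝ) := by push_cast; ring
        rw [h9, Real.rpow_natCast]
        ring
      have hX0 : (0:ℝ) < (3 * (t - s)) ^ (1 + b r0) := Real.rpow_pos_of_pos (by linarith) _
      have hY : (3 * (t - s)) ^ (1 + -(b r0)) =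
          9 * (t - s) ^ 2 / (3 * (t - s)) ^ (1 + b r0) := by
        rw [eq_div_iff hX0.ne', mul_comm]
        exact hXX
      have h2c : ((2:ℝ) ^ F.card) * (2:ℝ) ^ F.card = 4 ^ F.card := by
        rw [← mul_pow]; norm_num
      have hne1 : (1:ℝ) + b r0 ≠ 0 := by linarith
      have hne2 : (1:ℝ) + -(b r0) ≠ 0 := by linarith
      have hts : t - s ≠ 0 := by linarith
      have heq : (t - s)⁻¹ * (q * 2 ^ F.card * Gf * (2 * (3 * (t - s)) ^ (1 + b r0) / (1 + b r0))) *
          ((t - s)⁻¹ * (q * 2 ^ F.card * Gf⁻¹ * (2 * (3 * (t - s)) ^ (1 + -(b r0)) / (1 + -(b r0))))) =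
          q ^ 2 * (4 ^ F.card * (36 / ((1 + b r0) * (1 - b r0)))) := by
        rw [hY, ← h2c]
        have hone : (1:ℝ) - b r0 = 1 + -(b r0) := by ring
        rw [hone]
        field_simp
        ring
      rw [heq]
      have hmono : 36 / ((1 + b r0) * (1 - b r0)) ≤ 36 / (1 - β ^ 2) := by
        apply div_le_div_of_nonneg_left (by norm_num) hβsq
        have h1 : |b r0| ≤ β := hbβ r0 hr0
        have := abs_le.mp h1
        nlinarith
      have hq2 : (0:ℝ) ≤ q ^ 2 := sq_nonneg q
      have hterm1 : (0:ℝ) ≤ (2 * K ^ (2:ℝ) / (1 - β) / δ0) ^ 2 := sq_nonneg _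
      nlinarith [mul_le_mul_of_nonneg_left (mul_le_mul_of_nonneg_left hmono h4c) hq2]
    · -- no near root
      push_neg at hnear
      have hfar : ∀ r ∈ F, ∀ x ∈ Set.Ico s t, t - s ≤ |x - r| ∧ t - s ≤ |s - r| := by
        intro r hr x hx
        have h2 : 2 * (t - s) < |s - r| := hnear r hr
        have hxs : |x - s| ≤ t - s := by
          rw [abs_of_nonneg (by linarith [hx.1])]; linarith [hx.2]
        constructor
        · have h1 : |s - r| ≤ |s - x| + |x - r| := abs_sub_le s x r
          rw [abs_sub_comm s x] at h1
          linarith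
        · linarith
      have Hf := bound_far F b hb1 f hq hst hf hfar
      have Hg := bound_far F (fun r => -(b r)) hbn g hq hst hg
        (by simpa [abs_neg] using hfar)
      set Gf := ∏ r ∈ F, |s - r| ^ b r with hGf
      have hGfpos : 0 < Gf := by
        apply Finset.prod_pos
        intro r hr
        have := (hfar r hr s (by constructor <;> [linarith; linarith [hst]])).2
        exact Real.rpow_pos_of_pos (by linarith) _
      have hGg : (∏ r ∈ F, |s - r| ^ (-(b r))) = Gf⁻¹ := by
        rw [hGf, ← Finset.prod_inv_distrib]
        exact Finset.prod_congr rfl fun r hr => Real.rpow_neg (abs_nonneg _) _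
      rw [hGg] at Hg
      have := prod_avg_le hL hIf0 hIg0 Hf Hg
      refine this.trans ?_
      have heq : (t - s)⁻¹ * (q * 2 ^ F.card * Gf * (t - s)) * ((t - s)⁻¹ * (q * 2 ^ F.card * Gf⁻¹ * (t - s))) =
          q ^ 2 * 4 ^ F.card := by
        have h2 : ((2:ℝ) ^ F.card) * (2:ℝ) ^ F.card = 4 ^ F.card := by
          rw [← mul_pow]; norm_num
        field_simp
        rw [← h2]
        ring
      rw [heq]
      have hterm1 : (0:ℝ) ≤ (2 * K ^ (2:ℝ) / (1 - β) / δ0) ^ 2 := sq_nonneg _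
      have hterm2 : (0:ℝ) ≤ 4 ^ F.card * (36 / (1 - β ^ 2)) := by positivity
      nlinarith [sq_nonneg q]

/-- If `P` is a nonzero real polynomial and `-1 < deg(P)·a < 1`, then the weight
`|P(x)|^a` satisfies the scalar Muckenhoupt `A₂` condition on `[0,1)`:
`sup_I (|I|⁻¹ ∫_I |P|^a)(|I|⁻¹ ∫_I |P|^{-a}) < ∞` over all subintervals `I ⊆ [0,1)`. -/
theorem polynomial_power_A2 (P : Polynomial ℝ) (hP : P ≠ 0) (a : ℝ)
    (h1 : -1 < (P.natDegree : ℝ) * a) (h2 : (P.natDegree : ℝ) * a < 1) :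
    ∃ C : ℝ, ∀ s t : ℝ, 0 ≤ s → s < t → t ≤ 1 →
      ((t - s)⁻¹ * ∫ x in Set.Ico s t, |P.eval x| ^ a) *
        ((t - s)⁻¹ * ∫ x in Set.Ico s t, |P.eval x| ^ (-a)) ≤ C := by
  classical
  obtain ⟨Q, hPQ⟩ := P.prod_multiset_X_sub_C_dvd
  have hQne : Q ≠ 0 := by
    intro h
    rw [h, mul_zero] at hPQ
    exact hP hPQ
  have hprodne : (P.roots.map fun r => Polynomial.X - Polynomial.C r).prod ≠ 0 := by
    intro h
    rw [h, zero_mul] at hPQ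
    exact hP hPQ
  have hQroots : Q.roots = 0 := by
    have h0 : P.roots = P.roots + Q.roots := by
      conv_lhs => rw [hPQ]
      rw [Polynomial.roots_mul (hPQ ▸ hP), Polynomial.roots_multiset_prod_X_sub_C]
    exact (left_eq_add.mp h0)
  have hQ0 : ∀ x : ℝ, Q.eval x ≠ 0 := by
    intro x hx
    have : x ∈ Q.roots := by
      rw [Polynomial.mem_roots hQne]
      exact hx
    rw [hQroots] at this
    simp at this
  -- pointwise factorization
  have hPx : ∀ x : ℝ, |P.eval x| =
      (∏ r ∈ P.roots.toFinset, |x - r| ^ P.roots.count r) * |Q.eval x| := by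
    intro x
    conv_lhs => rw [hPQ]
    rw [Polynomial.eval_mul, abs_mul]
    congr 1
    rw [Polynomial.eval_multiset_prod, Multiset.map_map]
    have h1 : (P.roots.map ((Polynomial.eval x) ∘ fun r => Polynomial.X - Polynomial.C r)) =
        P.roots.map (fun r => x - r) := Multiset.map_congr rfl (by simp)
    rw [h1]
    have habs : ∀ (m : Multiset ℝ), |m.prod| = (m.map fun y => |y|).prod := by
      intro m
      induction m using Multiset.induction_on with
      | empty => simp
      | cons a s ih => simp [abs_mul, ih]
    rw [habs, Multiset.map_map]
    have h3 : (P.roots.map ((fun y => |y|) ∘ fun r => x - r)) =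
        P.roots.map fun r => |x - r| := Multiset.map_congr rfl (by simp)
    rw [h3]
    exact Finset.prod_multiset_map_count _ _
  have hPe : ∀ (e : ℝ) (x : ℝ), |P.eval x| ^ e =
      |Q.eval x| ^ e * ∏ r ∈ P.roots.toFinset, |x - r| ^ ((P.roots.count r : ℝ) * e) := by
    intro e x
    rw [hPx x, mul_comm, Real.mul_rpow (abs_nonneg _)
      (Finset.prod_nonneg fun r _ => pow_nonneg (abs_nonneg _) _)]
    congr 1
    rw [← Real.finset_prod_rpow _ _ (fun r _ => pow_nonneg (abs_nonneg _) _) e]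
    apply Finset.prod_congr rfl
    intro r _
    rw [← Real.rpow_natCast |x - r| (P.roots.count r), ← Real.rpow_mul (abs_nonneg _)]
  -- bounds on |Q|
  obtain ⟨x1, hx1m, hx1⟩ := isCompact_Icc.exists_isMinOn (Set.nonempty_Icc.mpr zero_le_one)
    (Q.continuous.abs.continuousOn : ContinuousOn (fun x => |Q.eval x|) (Set.Icc (0:ℝ) 1))
  obtain ⟨x2, hx2m, hx2⟩ := isCompact_Icc.exists_isMaxOn (Set.nonempty_Icc.mpr zero_le_one)
    (Q.continuous.abs.continuousOn : ContinuousOn (fun x => |Q.eval x|) (Set.Icc (0:ℝ) 1))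
  set c1 := |Q.eval x1| with hc1
  set c2 := |Q.eval x2| with hc2
  have hc1pos : 0 < c1 := abs_pos.mpr (hQ0 x1)
  have hQb : ∀ (e : ℝ) (x : ℝ), x ∈ Set.Icc (0:ℝ) 1 →
      |Q.eval x| ^ e ≤ max (c1 ^ e) (c2 ^ e) := by
    intro e x hx
    have hlow : c1 ≤ |Q.eval x| := hx1 hx
    have hhigh : |Q.eval x| ≤ c2 := hx2 hx
    rcases le_or_gt 0 e with he | he
    · exact le_trans (Real.rpow_le_rpow (abs_nonneg _) hhigh he) (le_max_right _ _)
    · exact le_trans (Real.rpow_le_rpow_of_nonpos hc1pos hlow he.le) (le_max_left _ _)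
  set q : ℝ := max (max (c1 ^ a) (c2 ^ a)) (max (c1 ^ (-a)) (c2 ^ (-a))) with hqdef
  have hq0 : 0 ≤ q := le_trans (Real.rpow_pos_of_pos hc1pos a).le
    (le_trans (le_max_left _ _) (le_max_left _ _))
  -- exponent family
  set F := P.roots.toFinset with hF
  set b : ℝ → ℝ := fun r => (P.roots.count r : ℝ) * a with hb
  have hβ : (∑ r ∈ F, |b r|) < 1 := by
    have hstep : (∑ r ∈ F, |b r|) = (Multiset.card P.roots : ℝ) * |a| := by
      rw [hb]
      have : ∀ r ∈ F, |(P.roots.count r : ℝ) * a| = (P.roots.count r : ℝ) * |a| := by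
        intro r _
        rw [abs_mul, Nat.abs_cast]
      rw [Finset.sum_congr rfl this, ← Finset.sum_mul]
      congr 1
      rw [← Nat.cast_sum]
      congr 1
      exact Multiset.toFinset_sum_count_eq _
    rw [hstep]
    have hcard : (Multiset.card P.roots : ℝ) ≤ (P.natDegree : ℝ) :=
      Nat.cast_le.mpr (P.card_roots' )
    have habs : (P.natDegree : ℝ) * |a| < 1 := by
      have := abs_lt.mpr ⟨h1, h2⟩
      rwa [abs_mul, Nat.abs_cast] at this
    nlinarith [abs_nonneg a]
  obtain ⟨C0, hC0⟩ := main_key F b rfl hβ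
  refine ⟨q ^ 2 * C0, fun s t hs hst ht => ?_⟩
  apply hC0 q _ _ hq0 s t hs hst ht
  · intro x hx
    have hx01 : x ∈ Set.Icc (0:ℝ) 1 := ⟨le_trans hs hx.1, le_trans hx.2.le ht⟩
    constructor
    · exact Real.rpow_nonneg (abs_nonneg _) _
    · rw [hPe a x]
      apply mul_le_mul_of_nonneg_right _
        (Finset.prod_nonneg fun r _ => Real.rpow_nonneg (abs_nonneg _) _)
      exact le_trans (hQb a x hx01) (le_max_left _ _)
  · intro x hx
    have hx01 : x ∈ Set.Icc (0:ℝ) 1 := ⟨le_trans hs hx.1, le_trans hx.2.le ht⟩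
    constructor
    · exact Real.rpow_nonneg (abs_nonneg _) _
    · rw [hPe (-a) x]
      have hconv : (∏ r ∈ F, |x - r| ^ ((P.roots.count r : ℝ) * (-a))) =
          ∏ r ∈ F, |x - r| ^ (-(b r)) := by
        apply Finset.prod_congr rfl
        intro r _
        rw [hb]
        ring_nf
      rw [hconv]
      apply mul_le_mul_of_nonneg_right _
        (Finset.prod_nonneg fun r _ => Real.rpow_nonneg (abs_nonneg _) _)
      exact le_trans (hQb (-a) x hx01) (le_max_right _ _)
end

section
/- Let g(x) = χ_{[0,1)}(x)|P(x)|^{a/2} where P is a nonzero polynomial and −1 < deg(P)·a < 1, and suppose P has a real zero in [0,1) with a < 0 (so Zg is unbounded), or a > 0 (so |Zg| is not bounded below). Then g ∈ L²(ℝ) and the function |Zg(x,u)|² = |P(x)|^a is in L¹([0,1)²) but either unbounded or not essentially bounded away from zero on [0,1)². -/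
open MeasureTheory Complex Real


lemma intInt_abs_rpow {s : ℝ} (hs : -1 < s) (a b : ℝ) :
    IntervalIntegrable (fun x => |x| ^ s) volume a b := by
  have H : ∀ c : ℝ, 0 ≤ c → IntervalIntegrable (fun x => |x| ^ s) volume 0 c := by
    intro c hc
    rw [intervalIntegrable_iff, Set.uIoc_of_le hc]
    have h := intervalIntegral.intervalIntegrable_rpow' hs (a := 0) (b := c)
    rw [intervalIntegrable_iff, Set.uIoc_of_le hc] at h
    refine h.congr_fun ?_ measurableSet_Ioc
    intro x hx; simp only [abs_of_pos hx.1]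
  have key : ∀ c : ℝ, IntervalIntegrable (fun x => |x| ^ s) volume 0 c := by
    intro c
    rcases le_total 0 c with hc | hc
    · exact H c hc
    · rw [IntervalIntegrable.iff_comp_neg, neg_zero]
      simpa [abs_neg] using H (-c) (by linarith)
  exact (key a).symm.trans (key b)

lemma integrableOn_abs_sub_rpow {s : ℝ} (hs : -1 < s) (r : ℝ) :
    IntegrableOn (fun x => |x - r| ^ s) (Set.Ico (0:ℝ) 1) := by
  have h2 : IntervalIntegrable (fun x => |x - r| ^ s) volume (-1) 2 := by
    simpa using (intInt_abs_rpow hs (-1 - r) (2 - r)).comp_sub_right r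
  rw [intervalIntegrable_iff] at h2
  refine h2.mono_set ?_
  rw [Set.uIoc_of_le (by norm_num : (-1:ℝ) ≤ 2)]
  intro x hx; exact ⟨by linarith [hx.1], by linarith [hx.2]⟩

lemma aux_pow_card_le_prod (s : Multiset ℝ) (c : ℝ) (hc : 0 ≤ c)
    (h : ∀ y ∈ s, c ≤ y) : c ^ Multiset.card s ≤ s.prod := by
  induction s using Multiset.induction with
  | empty => simp
  | cons y s ih =>
      have hy := h y (Multiset.mem_cons_self _ _)
      have ihs := ih fun z hz => h z (Multiset.mem_cons_of_mem hz)
      rw [Multiset.card_cons, Multiset.prod_cons, pow_succ]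
      calc c ^ Multiset.card s * c ≤ s.prod * y :=
            mul_le_mul ihs hy hc (le_trans (pow_nonneg hc _) ihs)
        _ = y * s.prod := mul_comm _ _

lemma aux_abs_prod (s : Multiset ℝ) : |s.prod| = (s.map fun y : ℝ => |y|).prod := by
  induction s using Multiset.induction with
  | empty => simp
  | cons y s ih => simp [abs_mul, ih]

lemma integrableOn_abs_poly_rpow (P : Polynomial ℝ) (hP : P ≠ 0) {a : ℝ} (ha : a ≠ 0)
    (h1 : -1 < (P.natDegree : ℝ) * a) :
    IntegrableOn (fun x => |P.eval x| ^ a) (Set.Ico (0:ℝ) 1) := by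
  have habs : Continuous fun x : ℝ => |P.eval x| := (Polynomial.continuous P).abs
  rcases lt_or_ge a 0 with hneg | hpos
  swap
  · exact ((habs.rpow_const fun x => Or.inr hpos).integrableOn_Icc).mono_set
      Set.Ico_subset_Icc_self
  -- a < 0 case
  obtain ⟨Q, hQP, hdeg, hQroots⟩ := P.exists_prod_multiset_X_sub_C_mul
  have hQ0 : Q ≠ 0 := by rintro rfl; rw [mul_zero] at hQP; exact hP hQP.symm
  have hQne : ∀ x : ℝ, Q.eval x ≠ 0 := by
    intro x hx
    have hm : x ∈ Q.roots := by rwa [Polynomial.mem_roots hQ0]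
    rw [hQroots] at hm; simp at hm
  obtain ⟨x₀, hx₀, hminQ⟩ := isCompact_Icc.exists_isMinOn
    (Set.nonempty_Icc.mpr zero_le_one) ((Polynomial.continuous Q).abs.continuousOn)
  set δ : ℝ := |Q.eval x₀| with hδdef
  have hδ : 0 < δ := abs_pos.mpr (hQne x₀)
  set D : ℕ := Multiset.card P.roots with hDdef
  have hDle : D ≤ P.natDegree := by omega
  have hDa : -1 < (D : ℝ) * a := by
    refine lt_of_lt_of_le h1 ?_
    have : (D : ℝ) ≤ (P.natDegree : ℝ) := by exact_mod_cast hDle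
    nlinarith
  -- the dominating function
  set G : ℝ → ℝ := fun x => δ ^ a * (1 + ∑ r ∈ P.roots.toFinset, |x - r| ^ ((D : ℝ) * a))
    with hGdef
  have hGint : IntegrableOn G (Set.Ico (0:ℝ) 1) := by
    refine (Integrable.add ?_ ?_).const_mul _
    · exact integrableOn_const measure_Ico_lt_top.ne
    · exact integrable_finset_sum _ fun r _ => integrableOn_abs_sub_rpow hDa r
  have hmeas : AEStronglyMeasurable (fun x => |P.eval x| ^ a)
      (volume.restrict (Set.Ico (0:ℝ) 1)) :=
    (habs.measurable.pow_const a).aestronglyMeasurable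
  refine Integrable.mono' hGint hmeas ?_
  rw [ae_restrict_iff' measurableSet_Ico]
  refine MeasureTheory.ae_of_all _ fun x hx => ?_
  have hxIcc : x ∈ Set.Icc (0:ℝ) 1 := Set.Ico_subset_Icc_self hx
  have hGnn : 0 ≤ ∑ r ∈ P.roots.toFinset, |x - r| ^ ((D : ℝ) * a) :=
    Finset.sum_nonneg fun r _ => Real.rpow_nonneg (abs_nonneg _) _
  rw [Real.norm_eq_abs, _root_.abs_of_nonneg (Real.rpow_nonneg (abs_nonneg _) _)]
  rcases eq_or_ne (P.eval x) 0 with hzero | hne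
  · rw [hzero, abs_zero, Real.zero_rpow ha]
    positivity
  -- x is not a root
  have hQx : δ ≤ |Q.eval x| := hminQ hxIcc
  -- the minimum quantity
  set T : Finset ℝ := insert (1:ℝ) (P.roots.toFinset.image fun r => |x - r|) with hTdef
  have hTne : T.Nonempty := ⟨1, Finset.mem_insert_self _ _⟩
  set m : ℝ := T.min' hTne with hmdef
  have hm1 : m ≤ 1 := Finset.min'_le _ _ (Finset.mem_insert_self _ _)
  have hmpos : 0 < m := by
    rw [hmdef, Finset.lt_min'_iff]
    intro y hy
    rcases Finset.mem_insert.mp hy with rfl | hy'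
    · exact one_pos
    · obtain ⟨r, hr, rfl⟩ := Finset.mem_image.mp hy'
      have hrx : x ≠ r := by
        rintro rfl
        exact hne ((Polynomial.mem_roots hP).mp (Multiset.mem_toFinset.mp hr))
      exact abs_pos.mpr (sub_ne_zero.mpr hrx)
  have hmle : ∀ r ∈ P.roots, m ≤ |x - r| := fun r hr =>
    Finset.min'_le _ _ (Finset.mem_insert_of_mem
      (Finset.mem_image_of_mem _ (Multiset.mem_toFinset.mpr hr)))
  -- factorization of |P x|
  have hPfact : |P.eval x| = (P.roots.map fun r => |x - r|).prod * |Q.eval x| := by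
    conv_lhs => rw [← hQP]
    rw [Polynomial.eval_mul, abs_mul, Polynomial.eval_multiset_prod, Multiset.map_map,
      aux_abs_prod, Multiset.map_map]
    congr 1
    refine congrArg _ (Multiset.map_congr rfl fun r _ => ?_)
    simp
  have hprodpos : (0:ℝ) < (P.roots.map fun r => |x - r|).prod := by
    have h := abs_pos.mpr hne
    rw [hPfact] at h
    have hq := abs_pos.mpr (hQne x)
    rcases mul_pos_iff.mp h with ⟨h1, _⟩ | ⟨_, h2⟩
    · exact h1
    · linarith
  have hprodge : m ^ D ≤ (P.roots.map fun r => |x - r|).prod := by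
    have := aux_pow_card_le_prod (P.roots.map fun r => |x - r|) m hmpos.le
      (by rintro y hy; obtain ⟨r, hr, rfl⟩ := Multiset.mem_map.mp hy; exact hmle r hr)
    simpa [hDdef] using this
  -- estimate
  have key : |P.eval x| ^ a ≤ δ ^ a * m ^ ((D : ℝ) * a) := by
    rw [hPfact, Real.mul_rpow (Multiset.prod_nonneg ?_) (abs_nonneg _)]
    · have e1 : ((P.roots.map fun r => |x - r|).prod) ^ a ≤ (m ^ D) ^ a :=
        Real.rpow_le_rpow_of_nonpos (pow_pos hmpos D) hprodge hneg.le
      have e2 : |Q.eval x| ^ a ≤ δ ^ a :=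
        Real.rpow_le_rpow_of_nonpos hδ hQx hneg.le
      have e3 : (m ^ D) ^ a = m ^ ((D : ℝ) * a) := by
        rw [← Real.rpow_natCast m D, ← Real.rpow_mul hmpos.le]
      calc (P.roots.map fun r => |x - r|).prod ^ a * |Q.eval x| ^ a
            ≤ (m ^ D) ^ a * δ ^ a := by
              apply mul_le_mul e1 e2 (Real.rpow_nonneg (abs_nonneg _) _)
                (Real.rpow_nonneg (pow_nonneg hmpos.le _) _)
        _ = δ ^ a * m ^ ((D : ℝ) * a) := by rw [e3, mul_comm]
    · intro y hy
      obtain ⟨r, hr, rfl⟩ := Multiset.mem_map.mp hy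
      exact abs_nonneg _
  refine key.trans ?_
  rw [hGdef]
  have hmsum : m ^ ((D : ℝ) * a) ≤ 1 + ∑ r ∈ P.roots.toFinset, |x - r| ^ ((D : ℝ) * a) := by
    have hmT : m ∈ T := Finset.min'_mem _ _
    rcases Finset.mem_insert.mp hmT with hm1' | hm'
    · rw [hm1', Real.one_rpow]; linarith
    · obtain ⟨r, hr, hrm⟩ := Finset.mem_image.mp hm'
      rw [← hrm]
      have : |x - r| ^ ((D : ℝ) * a) ≤ ∑ s ∈ P.roots.toFinset, |x - s| ^ ((D : ℝ) * a) :=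
        Finset.single_le_sum (fun s _ => Real.rpow_nonneg (abs_nonneg _) _) hr
      linarith
  exact mul_le_mul_of_nonneg_left hmsum (Real.rpow_nonneg hδ.le _)

/-- Let `g(x) = χ_{[0,1)}(x) |P(x)|^{a/2}` with `P` a nonzero real polynomial,
`-1 < deg(P)·a < 1`, where `P` has a real zero in `[0,1)` and `a ≠ 0`.  Then
`g ∈ L²(ℝ)`, and `|Zg(x,u)|² = |P(x)|^a` is in `L¹([0,1)²)` but is unbounded on
`[0,1)²` (when `a < 0`), resp. not essentially bounded away from zero (when `a > 0`). -/
theorem conditional_gabor_example (P : Polynomial ℝ) (hP : P ≠ 0) (a : ℝ)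
    (h1 : -1 < (P.natDegree : ℝ) * a) (h2 : (P.natDegree : ℝ) * a < 1)
    (hzero : ∃ x ∈ Set.Ico (0:ℝ) 1, P.eval x = 0) (ha : a ≠ 0)
    (g : ℝ → ℂ)
    (hg : ∀ x, g x = if x ∈ Set.Ico (0:ℝ) 1 then ((|P.eval x| ^ (a / 2) : ℝ) : ℂ) else 0)
    (F : ℝ × ℝ → ℝ) (hF : ∀ z, F z = |P.eval z.1| ^ a) :
    MemLp g 2 (volume : Measure ℝ) ∧
    IntegrableOn F ((Set.Ico (0:ℝ) 1) ×ˢ (Set.Ico (0:ℝ) 1)) ∧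
    (a < 0 → ∀ C : ℝ,
      ¬ (∀ᵐ z ∂(volume.restrict ((Set.Ico (0:ℝ) 1) ×ˢ (Set.Ico (0:ℝ) 1))), F z ≤ C)) ∧
    (0 < a → ∀ c : ℝ, 0 < c →
      ¬ (∀ᵐ z ∂(volume.restrict ((Set.Ico (0:ℝ) 1) ×ˢ (Set.Ico (0:ℝ) 1))), c ≤ F z)) := by
  have habs : Continuous fun x : ℝ => |P.eval x| := (Polynomial.continuous P).abs
  have hfa : IntegrableOn (fun x => |P.eval x| ^ a) (Set.Ico (0:ℝ) 1) :=
    integrableOn_abs_poly_rpow P hP ha h1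
  -- g as indicator
  have hgind : g = Set.indicator (Set.Ico (0:ℝ) 1)
      (fun x => ((|P.eval x| ^ (a / 2) : ℝ) : ℂ)) := by
    funext x
    rw [hg x, Set.indicator_apply]
  have hgmeas : AEStronglyMeasurable g (volume : Measure ℝ) := by
    rw [hgind]
    exact ((Complex.measurable_ofReal.comp
      (habs.measurable.pow_const (a / 2))).indicator measurableSet_Ico).aestronglyMeasurable
  have hFmeas : Measurable F := by
    have : F = fun z : ℝ × ℝ => |P.eval z.1| ^ a := funext hF
    rw [this]
    exact ((habs.comp continuous_fst).measurable).pow_const a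
  refine ⟨?_, ?_, ?_, ?_⟩
  · -- Memℒp g 2
    rw [memLp_two_iff_integrable_sq_norm hgmeas]
    have heq : (fun x => ‖g x‖ ^ 2) =
        Set.indicator (Set.Ico (0:ℝ) 1) (fun x => |P.eval x| ^ a) := by
      funext x
      rw [hg x, Set.indicator_apply]
      split_ifs with hx
      · rw [Complex.norm_real, Real.norm_eq_abs,
          _root_.abs_of_nonneg (Real.rpow_nonneg (abs_nonneg _) _), sq]
        rw [← Real.rpow_add' (abs_nonneg _) (by rw [add_halves]; exact ha), add_halves]
      · simp
    rw [heq, integrable_indicator_iff measurableSet_Ico]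
    exact hfa
  · -- product integrability
    unfold IntegrableOn
    rw [show ((volume : Measure (ℝ × ℝ))) = (volume : Measure ℝ).prod volume from
      Measure.volume_eq_prod ℝ ℝ, ← Measure.prod_restrict]
    have hone : Integrable (fun _ : ℝ => (1:ℝ)) (volume.restrict (Set.Ico (0:ℝ) 1)) :=
      integrableOn_const measure_Ico_lt_top.ne
    have := hfa.mul_prod hone
    refine this.congr ?_
    refine MeasureTheory.ae_of_all _ fun z => ?_
    simp [hF z]
  · -- a < 0 : unbounded
    intro hneg C hae
    obtain ⟨x₀, hx₀, hPx₀⟩ := hzero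
    set ε : ℝ := (|C| + 1) ^ (1/a) with hεdef
    have hC1 : (1:ℝ) ≤ |C| + 1 := by linarith [abs_nonneg C]
    have hεpos : 0 < ε := Real.rpow_pos_of_pos (by linarith) _
    have hεa : ε ^ a = |C| + 1 := by
      rw [hεdef, ← Real.rpow_mul (by linarith), one_div, inv_mul_cancel₀ ha, Real.rpow_one]
    -- small interval
    have hcont := (Polynomial.continuous P).continuousAt (x := x₀)
    rw [Metric.continuousAt_iff] at hcont
    obtain ⟨δ, hδpos, hδ⟩ := hcont ε hεpos
    set η : ℝ := min δ (1 - x₀) with hηdef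
    have hηpos : 0 < η := lt_min hδpos (by linarith [hx₀.2])
    set I : Set ℝ := Set.Ioo x₀ (x₀ + η) with hIdef
    have hIsub : I ⊆ Set.Ico (0:ℝ) 1 := by
      rintro y ⟨hy1, hy2⟩
      constructor
      · linarith [hx₀.1]
      · have : η ≤ 1 - x₀ := min_le_right _ _
        linarith
    have hIsmall : ∀ y ∈ I, |P.eval y| < ε := by
      rintro y ⟨hy1, hy2⟩
      have hdist : dist y x₀ < δ := by
        rw [Real.dist_eq, abs_of_pos (by linarith)]
        have : η ≤ δ := min_le_left _ _
        linarith
      have := hδ hdist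
      rwa [Real.dist_eq, hPx₀, sub_zero] at this
    -- the bad set
    set R : Set ℝ := {y | P.eval y = 0} with hRdef
    have hRnull : volume R = 0 := (Polynomial.finite_setOf_isRoot hP).measure_zero _
    set E : Set (ℝ × ℝ) := (I \ R) ×ˢ Set.Ico (0:ℝ) 1 with hEdef
    have hEbig : ∀ z ∈ E, z ∈ (Set.Ico (0:ℝ) 1 ×ˢ Set.Ico (0:ℝ) 1) ∧ C < F z := by
      rintro ⟨y, u⟩ ⟨⟨hyI, hyR⟩, hu⟩
      refine ⟨⟨hIsub hyI, hu⟩, ?_⟩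
      rw [hF]
      have hy0 : 0 < |P.eval y| := abs_pos.mpr hyR
      have : ε ^ a < |P.eval y| ^ a :=
        Real.rpow_lt_rpow_of_neg hy0 (hIsmall y hyI) hneg
      rw [hεa] at this
      have : |C| + 1 ≤ |P.eval y| ^ a := this.le
      calc C ≤ |C| := le_abs_self C
        _ < |P.eval y| ^ a := by linarith
    -- measure of E is positive
    have hEmeas : volume E = ENNReal.ofReal η := by
      rw [hEdef, show ((volume : Measure (ℝ × ℝ))) = (volume : Measure ℝ).prod volume from
        Measure.volume_eq_prod ℝ ℝ, Measure.prod_prod]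
      rw [measure_diff_null hRnull]
      simp [hIdef, Real.volume_Ioo, Real.volume_Ico]
    have hEpos : 0 < volume E := by
      rw [hEmeas]; exact ENNReal.ofReal_pos.mpr hηpos
    -- contradiction
    have hnullset : volume.restrict (Set.Ico (0:ℝ) 1 ×ˢ Set.Ico (0:ℝ) 1)
        {z | ¬ F z ≤ C} = 0 := by
      rw [← MeasureTheory.ae_iff] at *
      exact hae
    rw [Measure.restrict_apply (by
      have : {z : ℝ × ℝ | ¬ F z ≤ C} = {z | C < F z} := by
        ext z; simp [not_le]
      rw [this]
      exact measurableSet_lt measurable_const hFmeas)] at hnullset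
    have hsub : E ⊆ {z | ¬ F z ≤ C} ∩ (Set.Ico (0:ℝ) 1 ×ˢ Set.Ico (0:ℝ) 1) := by
      intro z hz
      obtain ⟨hz1, hz2⟩ := hEbig z hz
      exact ⟨not_le.mpr hz2, hz1⟩
    have := measure_mono (μ := volume) hsub
    rw [hnullset] at this
    exact absurd (le_antisymm this zero_le) hEpos.ne'
  · -- 0 < a : not bounded below
    intro hpos c hc hae
    obtain ⟨x₀, hx₀, hPx₀⟩ := hzero
    set ε : ℝ := c ^ (1/a) with hεdef
    have hεpos : 0 < ε := Real.rpow_pos_of_pos hc _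
    have hεa : ε ^ a = c := by
      rw [hεdef, ← Real.rpow_mul hc.le, one_div, inv_mul_cancel₀ ha, Real.rpow_one]
    have hcont := (Polynomial.continuous P).continuousAt (x := x₀)
    rw [Metric.continuousAt_iff] at hcont
    obtain ⟨δ, hδpos, hδ⟩ := hcont ε hεpos
    set η : ℝ := min δ (1 - x₀) with hηdef
    have hηpos : 0 < η := lt_min hδpos (by linarith [hx₀.2])
    set I : Set ℝ := Set.Ioo x₀ (x₀ + η) with hIdef
    have hIsub : I ⊆ Set.Ico (0:ℝ) 1 := by
      rintro y ⟨hy1, hy2⟩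
      refine ⟨by linarith [hx₀.1], ?_⟩
      have : η ≤ 1 - x₀ := min_le_right _ _
      linarith
    have hIsmall : ∀ y ∈ I, |P.eval y| < ε := by
      rintro y ⟨hy1, hy2⟩
      have hdist : dist y x₀ < δ := by
        rw [Real.dist_eq, abs_of_pos (by linarith)]
        have : η ≤ δ := min_le_left _ _
        linarith
      have := hδ hdist
      rwa [Real.dist_eq, hPx₀, sub_zero] at this
    set E : Set (ℝ × ℝ) := I ×ˢ Set.Ico (0:ℝ) 1 with hEdef
    have hEbig : ∀ z ∈ E, z ∈ (Set.Ico (0:ℝ) 1 ×ˢ Set.Ico (0:ℝ) 1) ∧ F z < c := by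
      rintro ⟨y, u⟩ ⟨hyI, hu⟩
      refine ⟨⟨hIsub hyI, hu⟩, ?_⟩
      rw [hF]
      rcases eq_or_ne (P.eval y) 0 with h0 | h0
      · rw [h0, abs_zero, Real.zero_rpow ha]; exact hc
      · have : |P.eval y| ^ a < ε ^ a :=
          Real.rpow_lt_rpow (abs_nonneg _) (hIsmall y hyI) hpos
        rwa [hεa] at this
    have hEmeas : volume E = ENNReal.ofReal η := by
      rw [hEdef, show ((volume : Measure (ℝ × ℝ))) = (volume : Measure ℝ).prod volume from
        Measure.volume_eq_prod ℝ ℝ, Measure.prod_prod]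
      simp [hIdef, Real.volume_Ioo, Real.volume_Ico]
    have hEpos : 0 < volume E := by
      rw [hEmeas]; exact ENNReal.ofReal_pos.mpr hηpos
    have hnullset : volume.restrict (Set.Ico (0:ℝ) 1 ×ˢ Set.Ico (0:ℝ) 1)
        {z | ¬ c ≤ F z} = 0 := by
      rw [← MeasureTheory.ae_iff] at *
      exact hae
    rw [Measure.restrict_apply (by
      have : {z : ℝ × ℝ | ¬ c ≤ F z} = {z | F z < c} := by
        ext z; simp [not_le]
      rw [this]
      exact measurableSet_lt hFmeas measurable_const)] at hnullset
    have hsub : E ⊆ {z | ¬ c ≤ F z} ∩ (Set.Ico (0:ℝ) 1 ×ˢ Set.Ico (0:ℝ) 1) := by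
      intro z hz
      obtain ⟨hz1, hz2⟩ := hEbig z hz
      exact ⟨not_le.mpr hz2, hz1⟩
    have := measure_mono (μ := volume) hsub
    rw [hnullset] at this
    exact absurd (le_antisymm this zero_le) hEpos.ne'
end
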